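/- Let φ be a quantifier-free dependence logic formula of disjunction-width at most 1 over a relational signature σ, with free variables x̄ = (x₁,…,x_n). Then there exists a first-order sentence χ over the signature σ∪{R}, where R is a fresh n-ary relation symbol, such that for every σ-structure 𝔄 and every team X with domain {x₁,…,x_n}: 𝔄⊨_X φ if and only if (𝔄, X(x̄)) ⊨ χ, where X(x̄)={s(x̄) : s∈X} interprets R. -/

import Mathlib

/- Statement 12.  Let φ be a quantifier-free dependence logic formula of
disjunction-width at most 1 over a relational signature σ, with free
variables x̄ = (x₁,…,x_n).  Then there is a first-order sentence χ over
σ ∪ {R} (R a fresh n-ary relation symbol) such that for every σ-structure 𝔄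
and team X with domain {x₁,…,x_n}:  𝔄 ⊨_X φ  iff  (𝔄, X(x̄)) ⊨ χ. -/

open FirstOrder

/-- The signature `σ ∪ {R}` obtained from `L` by adding a fresh `n`-ary
relation symbol `R`. -/
def addRel (L : FirstOrder.Language) (n : ℕ) : FirstOrder.Language where
  Functions := L.Functions
  Relations := fun k => L.Relations k ⊕ PLift (k = n)

/-- The expansion `(𝔄, R)` of an `L`-structure `𝔄` to an
`addRel L n`-structure interpreting the fresh symbol by the `n`-ary relation
`R`. -/
def expandStructure (L : FirstOrder.Language) (n : ℕ) (A : Type*)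
    [L.Structure A] (R : (Fin n → A) → Prop) : (addRel L n).Structure A where
  funMap := fun f v => Language.Structure.funMap (L := L) f v
  RelMap := fun r v =>
    match r with
    | Sum.inl r => Language.Structure.RelMap (L := L) r v
    | Sum.inr h => R (fun j => v (Fin.cast h.down.symm j))

/-- Formulas of dependence logic (negation normal form) over the relational
signature `L`, with variables from `V`. -/
inductive DepFormula (L : FirstOrder.Language) (V : Type*) : Type _ where
  | rel {k : ℕ} (R : L.Relations k) (ts : Fin k → V)
  | nrel {k : ℕ} (R : L.Relations k) (ts : Fin k → V)
  | eq (x y : V)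
  | neq (x y : V)
  | dep (xs : List V) (y : V)
  | and (φ ψ : DepFormula L V)
  | or (φ ψ : DepFormula L V)
  | ex (x : V) (φ : DepFormula L V)
  | all (x : V) (φ : DepFormula L V)

/-- A formula is quantifier-free if it contains no quantifiers. -/
def DepFormula.qfree {L : FirstOrder.Language} {V : Type*} :
    DepFormula L V → Prop
  | .and φ ψ => φ.qfree ∧ ψ.qfree
  | .or φ ψ => φ.qfree ∧ ψ.qfree
  | .ex _ _ => False
  | .all _ _ => False
  | _ => True

/-- The disjunction-width `Ω∨`: 1 for dependence atoms, 0 for first-order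
literals, max under `∧`, sum under `∨`, preserved by quantifiers. -/
def DepFormula.width {L : FirstOrder.Language} {V : Type*} :
    DepFormula L V → ℕ
  | .dep _ _ => 1
  | .and φ ψ => max φ.width ψ.width
  | .or φ ψ => φ.width + ψ.width
  | .ex _ φ => φ.width
  | .all _ φ => φ.width
  | _ => 0

/-- Lax team semantics `𝔄 ⊨_X φ` for dependence logic. -/
def TeamSat {L : FirstOrder.Language} {V : Type*} [DecidableEq V]
    (A : Type*) [L.Structure A] : DepFormula L V → Set (V → A) → Prop
  | .rel R ts, X => ∀ s ∈ X, Language.Structure.RelMap R (fun i => s (ts i))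
  | .nrel R ts, X => ∀ s ∈ X, ¬ Language.Structure.RelMap R (fun i => s (ts i))
  | .eq x y, X => ∀ s ∈ X, s x = s y
  | .neq x y, X => ∀ s ∈ X, s x ≠ s y
  | .dep xs y, X => ∀ s ∈ X, ∀ s' ∈ X, xs.map s = xs.map s' → s y = s' y
  | .and φ ψ, X => TeamSat A φ X ∧ TeamSat A ψ X
  | .or φ ψ, X => ∃ Y Z : Set (V → A), Y ∪ Z = X ∧ TeamSat A φ Y ∧ TeamSat A ψ Z
  | .ex x φ, X => ∃ F : (V → A) → Set A, (∀ s ∈ X, (F s).Nonempty) ∧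
      TeamSat A φ {t | ∃ s ∈ X, ∃ a ∈ F s, t = Function.update s x a}
  | .all x φ, X => TeamSat A φ {t | ∃ s ∈ X, ∃ a : A, t = Function.update s x a}

namespace DepAux

open FirstOrder Language

variable (L : FirstOrder.Language) (n : ℕ)

/-- Inclusion of `L` into `addRel L n`. -/
def incl : L →ᴸ addRel L n := ⟨fun _ f => f, fun _ r => Sum.inl r⟩

/-- Atomic formula `R(f)` for the fresh relation symbol. -/
def rAtom {α : Type*} (f : Fin n → α) : (addRel L n).Formula α :=
  Relations.formula (Sum.inr ⟨rfl⟩) fun i => Term.var (f i)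

/-- Lift an `L`-formula to an `addRel L n`-formula. -/
def lift {α : Type*} (γ : L.Formula α) : (addRel L n).Formula α :=
  (incl L n).onFormula γ

/-- `∀ v (R v ∧ γ v → δ v)`. -/
noncomputable def flatSent (γ δ : L.Formula (Fin n)) : (addRel L n).Sentence :=
  Formula.iAlls (Fin n) (Formula.relabel (Sum.inr : Fin n → Empty ⊕ Fin n)
    ((rAtom L n id ⊓ lift L n γ).imp (lift L n δ)))

/-- componentwise agreement of two tuples on a list of coordinates. -/
def agree : List (Fin n) → (addRel L n).Formula (Fin n ⊕ Fin n)
  | [] => ⊤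
  | x :: xs => (Term.equal (.var (Sum.inl x)) (.var (Sum.inr x))) ⊓ agree xs

/-- Sentence expressing a dependence atom relative to a guard. -/
noncomputable def depSent (γ : L.Formula (Fin n)) (xs : List (Fin n)) (y : Fin n) :
    (addRel L n).Sentence :=
  Formula.iAlls (Fin n ⊕ Fin n) (Formula.relabel (Sum.inr : (Fin n ⊕ Fin n) → Empty ⊕ (Fin n ⊕ Fin n))
    (((((rAtom L n Sum.inl) ⊓ (lift L n γ).relabel Sum.inl) ⊓
        ((rAtom L n Sum.inr) ⊓ (lift L n γ).relabel Sum.inr)) ⊓ agree L n xs).imp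
      (Term.equal (.var (Sum.inl y)) (.var (Sum.inr y)))))

/-- First-order translation of a width-0 quantifier-free formula. -/
def t0 : DepFormula L (Fin n) → L.Formula (Fin n)
  | .rel R ts => R.formula fun i => .var (ts i)
  | .nrel R ts => (R.formula fun i => .var (ts i)).not
  | .eq x y => Term.equal (.var x) (.var y)
  | .neq x y => (Term.equal (.var x) (.var y)).not
  | .and φ ψ => t0 φ ⊓ t0 ψ
  | .or φ ψ => t0 φ ⊔ t0 ψ
  | _ => ⊥

/-- Translation of width ≤ 1 quantifier-free formulas, with a guard `γ`
carving out the relevant subteam. -/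
noncomputable def t1 : DepFormula L (Fin n) → L.Formula (Fin n) → (addRel L n).Sentence
  | .dep xs y, γ => depSent L n γ xs y
  | .and φ ψ, γ => t1 φ γ ⊓ t1 ψ γ
  | .or φ ψ, γ =>
      if φ.width = 0 then t1 ψ (γ ⊓ (t0 L n φ).not) else t1 φ (γ ⊓ (t0 L n ψ).not)
  | φ, γ => flatSent L n γ (t0 L n φ)

section Semantics

variable {A : Type} [L.Structure A] (X : Set (Fin n → A))

lemma realize_rAtom {α : Type*} (f : Fin n → α) (v : α → A) :
    @Formula.Realize (addRel L n) A (expandStructure L n A (· ∈ X)) α (rAtom L n f) v ↔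
      (fun i => v (f i)) ∈ X := by
  letI := expandStructure L n A (· ∈ X)
  exact Iff.rfl

lemma realize_lift {α : Type*} (γ : L.Formula α) (v : α → A) :
    @Formula.Realize (addRel L n) A (expandStructure L n A (· ∈ X)) α (lift L n γ) v ↔
      γ.Realize v := by
  letI := expandStructure L n A (· ∈ X)
  haveI : (incl L n).IsExpansionOn A := ⟨fun _ _ => rfl, fun _ _ => rfl⟩
  exact (incl L n).realize_onFormula γ

lemma realize_flatSent (γ δ : L.Formula (Fin n)) :
    @Sentence.Realize (addRel L n) A (expandStructure L n A (· ∈ X)) (flatSent L n γ δ) ↔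
      ∀ v : Fin n → A, v ∈ X → γ.Realize v → δ.Realize v := by
  letI := expandStructure L n A (· ∈ X)
  rw [Sentence.Realize, flatSent, Formula.realize_iAlls]
  simp only [Formula.realize_relabel]
  refine forall_congr' fun v => ?_
  rw [Formula.realize_imp, Formula.realize_inf, realize_rAtom, realize_lift, realize_lift]
  simp [and_imp]

lemma realize_agree (xs : List (Fin n)) (i : Fin n ⊕ Fin n → A) :
    @Formula.Realize (addRel L n) A (expandStructure L n A (· ∈ X)) _ (agree L n xs) i ↔
      xs.map (fun x => i (Sum.inl x)) = xs.map (fun x => i (Sum.inr x)) := by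
  letI := expandStructure L n A (· ∈ X)
  induction xs with
  | nil => simp [agree]
  | cons x xs ih =>
      simp only [agree, Formula.realize_inf, Formula.realize_equal, Term.realize_var,
        List.map_cons, List.cons.injEq, ih]

lemma realize_depSent (γ : L.Formula (Fin n)) (xs : List (Fin n)) (y : Fin n) :
    @Sentence.Realize (addRel L n) A (expandStructure L n A (· ∈ X)) (depSent L n γ xs y) ↔
      ∀ v w : Fin n → A, v ∈ X → γ.Realize v → w ∈ X → γ.Realize w →
        xs.map v = xs.map w → v y = w y := by
  letI := expandStructure L n A (· ∈ X)
  rw [Sentence.Realize, depSent, Formula.realize_iAlls]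
  simp only [Formula.realize_relabel]
  constructor
  · intro h v w hv hγv hw hγw hxs
    have := h (Sum.elim v w)
    rw [Formula.realize_imp, Formula.realize_inf, Formula.realize_inf, Formula.realize_inf,
      Formula.realize_inf, realize_rAtom, realize_rAtom, Formula.realize_relabel,
      Formula.realize_relabel, realize_lift, realize_lift, realize_agree,
      Formula.realize_equal] at this
    simp only [Term.realize_var, Sum.elim_inl, Sum.elim_inr, Function.comp_def] at this
    exact this ⟨⟨⟨hv, hγv⟩, hw, hγw⟩, hxs⟩
  · intro h i
    rw [Formula.realize_imp, Formula.realize_inf, Formula.realize_inf, Formula.realize_inf,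
      Formula.realize_inf, realize_rAtom, realize_rAtom, Formula.realize_relabel,
      Formula.realize_relabel, realize_lift, realize_lift, realize_agree,
      Formula.realize_equal]
    simp only [Term.realize_var, Function.comp_def]
    rintro ⟨⟨⟨hv, hγv⟩, hw, hγw⟩, hxs⟩
    exact h _ _ hv hγv hw hγw hxs

/-- Flatness of width-0 quantifier-free formulas. -/
lemma flat (φ : DepFormula L (Fin n)) (hq : φ.qfree) (hw : φ.width = 0)
    (Y : Set (Fin n → A)) :
    TeamSat A φ Y ↔ ∀ s ∈ Y, (t0 L n φ).Realize s := by
  induction φ generalizing Y with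
  | rel R ts => simp [TeamSat, t0, Formula.realize_rel]
  | nrel R ts => simp [TeamSat, t0, Formula.realize_rel]
  | eq x y => simp [TeamSat, t0, Formula.realize_equal]
  | neq x y => simp [TeamSat, t0, Formula.realize_equal, Ne]
  | dep xs y => simp [DepFormula.width] at hw
  | and φ ψ ihφ ihψ =>
      rw [DepFormula.width, Nat.max_eq_zero_iff] at hw
      rw [show TeamSat A (φ.and ψ) Y = (TeamSat A φ Y ∧ TeamSat A ψ Y) from rfl,
        ihφ hq.1 hw.1, ihψ hq.2 hw.2]
      constructor
      · rintro ⟨h1, h2⟩ s hs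
        rw [t0, Formula.realize_inf]; exact ⟨h1 s hs, h2 s hs⟩
      · intro h
        constructor <;> intro s hs <;>
          · have := h s hs; rw [t0, Formula.realize_inf] at this; tauto
  | or φ ψ ihφ ihψ =>
      rw [DepFormula.width, Nat.add_eq_zero] at hw
      constructor
      · rintro ⟨Y1, Y2, hU, h1, h2⟩ s hs
        rw [t0, Formula.realize_sup]
        rw [← hU] at hs
        rcases hs with hs | hs
        · exact Or.inl ((ihφ hq.1 hw.1 Y1).mp h1 s hs)
        · exact Or.inr ((ihψ hq.2 hw.2 Y2).mp h2 s hs)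
      · intro h
        refine ⟨{s ∈ Y | (t0 L n φ).Realize s}, {s ∈ Y | ¬ (t0 L n φ).Realize s}, ?_, ?_, ?_⟩
        · ext s; by_cases hs : (t0 L n φ).Realize s <;> simp [hs]
        · exact (ihφ hq.1 hw.1 _).mpr fun s hs => hs.2
        · refine (ihψ hq.2 hw.2 _).mpr fun s hs => ?_
          have hY := h s hs.1
          rw [t0, Formula.realize_sup] at hY
          exact hY.resolve_left hs.2
  | ex x φ ih => exact absurd hq id
  | all x φ ih => exact absurd hq id

/-- Downward closure for quantifier-free formulas. -/
lemma dc (φ : DepFormula L (Fin n)) (hq : φ.qfree) {Y Z : Set (Fin n → A)}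
    (hsub : Z ⊆ Y) (h : TeamSat A φ Y) : TeamSat A φ Z := by
  induction φ generalizing Y Z with
  | rel R ts => exact fun s hs => h s (hsub hs)
  | nrel R ts => exact fun s hs => h s (hsub hs)
  | eq x y => exact fun s hs => h s (hsub hs)
  | neq x y => exact fun s hs => h s (hsub hs)
  | dep xs y => exact fun s hs s' hs' => h s (hsub hs) s' (hsub hs')
  | and φ ψ ihφ ihψ => exact ⟨ihφ hq.1 hsub h.1, ihψ hq.2 hsub h.2⟩
  | or φ ψ ihφ ihψ =>
      obtain ⟨Y1, Y2, hU, h1, h2⟩ := h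
      exact ⟨Y1 ∩ Z, Y2 ∩ Z, by rw [← Set.union_inter_distrib_right, hU,
          Set.inter_eq_right.mpr hsub],
        ihφ hq.1 Set.inter_subset_left h1, ihψ hq.2 Set.inter_subset_left h2⟩
  | ex x φ ih => exact absurd hq id
  | all x φ ih => exact absurd hq id

/-- The key reduction for disjunctions where the second disjunct is flat. -/
lemma or_flat (φ ψ : DepFormula L (Fin n)) (hqφ : φ.qfree) (hqψ : ψ.qfree)
    (hwψ : ψ.width = 0) (Y : Set (Fin n → A)) :
    TeamSat A (.or φ ψ) Y ↔ TeamSat A φ {s ∈ Y | ¬ (t0 L n ψ).Realize s} := by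
  constructor
  · rintro ⟨Y1, Y2, hU, h1, h2⟩
    refine dc L n φ hqφ ?_ h1
    intro s hs
    have hsY : s ∈ Y := hs.1
    rw [← hU] at hsY
    rcases hsY with h | h
    · exact h
    · exact absurd ((flat L n ψ hqψ hwψ Y2).mp h2 s h) hs.2
  · intro h
    refine ⟨{s ∈ Y | ¬ (t0 L n ψ).Realize s}, {s ∈ Y | (t0 L n ψ).Realize s}, ?_, h, ?_⟩
    · ext s; by_cases hs : (t0 L n ψ).Realize s <;> simp [hs]
    · exact (flat L n ψ hqψ hwψ _).mpr fun s hs => hs.2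

lemma or_comm' (φ ψ : DepFormula L (Fin n)) (Y : Set (Fin n → A)) :
    TeamSat A (.or φ ψ) Y ↔ TeamSat A (.or ψ φ) Y := by
  constructor <;> rintro ⟨Y1, Y2, hU, h1, h2⟩ <;>
    exact ⟨Y2, Y1, by rw [Set.union_comm]; exact hU, h2, h1⟩

/-- Main correctness lemma for the translation `t1`. -/
lemma t1_correct (φ : DepFormula L (Fin n)) (hq : φ.qfree) (hw : φ.width ≤ 1)
    (γ : L.Formula (Fin n)) :
    TeamSat A φ {s ∈ X | γ.Realize s} ↔
      @Sentence.Realize (addRel L n) A (expandStructure L n A (· ∈ X)) (t1 L n φ γ) := by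
  letI := expandStructure L n A (· ∈ X)
  induction φ generalizing γ with
  | rel R ts =>
      rw [show t1 L n (.rel R ts) γ = flatSent L n γ (t0 L n (.rel R ts)) from rfl,
        realize_flatSent, flat L n (DepFormula.rel R ts) trivial rfl]
      simp [and_imp]
  | nrel R ts =>
      rw [show t1 L n (.nrel R ts) γ = flatSent L n γ (t0 L n (.nrel R ts)) from rfl,
        realize_flatSent, flat L n (DepFormula.nrel R ts) trivial rfl]
      simp [and_imp]
  | eq x y =>
      rw [show t1 L n (.eq x y) γ = flatSent L n γ (t0 L n (.eq x y)) from rfl,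
        realize_flatSent, flat L n (DepFormula.eq x y) trivial rfl]
      simp [and_imp]
  | neq x y =>
      rw [show t1 L n (.neq x y) γ = flatSent L n γ (t0 L n (.neq x y)) from rfl,
        realize_flatSent, flat L n (DepFormula.neq x y) trivial rfl]
      simp [and_imp]
  | dep xs y =>
      rw [show t1 L n (.dep xs y) γ = depSent L n γ xs y from rfl, realize_depSent]
      constructor
      · intro h v w hv hγv hw' hγw hxs
        exact h v ⟨hv, hγv⟩ w ⟨hw', hγw⟩ hxs
      · intro h s hs s' hs' hxs
        exact h s s' hs.1 hs.2 hs'.1 hs'.2 hxs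
  | and φ ψ ihφ ihψ =>
      rw [show t1 L n (.and φ ψ) γ = t1 L n φ γ ⊓ t1 L n ψ γ from rfl]
      rw [DepFormula.width, max_le_iff] at hw
      rw [show (TeamSat A (φ.and ψ) {s ∈ X | γ.Realize s}) =
        (TeamSat A φ {s ∈ X | γ.Realize s} ∧ TeamSat A ψ {s ∈ X | γ.Realize s}) from rfl]
      exact (and_congr (ihφ hq.1 hw.1 γ) (ihψ hq.2 hw.2 γ)).trans Formula.realize_inf.symm
  | or φ ψ ihφ ihψ =>
      rw [DepFormula.width] at hw
      rw [show t1 L n (.or φ ψ) γ = (if φ.width = 0 then t1 L n ψ (γ ⊓ (t0 L n φ).not)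
        else t1 L n φ (γ ⊓ (t0 L n ψ).not)) from rfl]
      by_cases h0 : φ.width = 0
      · rw [if_pos h0, or_comm', or_flat L n ψ φ hq.2 hq.1 h0]
        have hset : {s ∈ {s ∈ X | γ.Realize s} | ¬ (t0 L n φ).Realize s}
            = {s ∈ X | (γ ⊓ (t0 L n φ).not).Realize s} := by
          ext s; simp [Formula.realize_inf, Formula.realize_not, and_assoc]
        rw [hset]
        exact ihψ hq.2 (by omega) (γ ⊓ (t0 L n φ).not)
      · have h0' : ψ.width = 0 := by omega
        rw [if_neg h0, or_flat L n φ ψ hq.1 hq.2 h0']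
        have hset : {s ∈ {s ∈ X | γ.Realize s} | ¬ (t0 L n ψ).Realize s}
            = {s ∈ X | (γ ⊓ (t0 L n ψ).not).Realize s} := by
          ext s; simp [Formula.realize_inf, Formula.realize_not, and_assoc]
        rw [hset]
        exact ihφ hq.1 (by omega) (γ ⊓ (t0 L n ψ).not)
  | ex x φ ih => exact absurd hq id
  | all x φ ih => exact absurd hq id

end Semantics

end DepAux

/-- A quantifier-free dependence logic formula `φ` with
`Ω∨(φ) ≤ 1` and free variables among `x₁, …, x_n` is, on teams `X` with
domain `{x₁,…,x_n}`, equivalent to a first-order sentence `χ` over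
`σ ∪ {R}`, where `R` is interpreted by the `n`-ary relation
`X(x̄) = {(s x₁, …, s x_n) : s ∈ X}` (an assignment with domain `{x₁,…,x_n}`
being identified with the `n`-tuple of its values). -/
theorem qfree_width_le_one_fo_definable (L : FirstOrder.Language) (n : ℕ)
    (φ : DepFormula L (Fin n)) (hq : φ.qfree) (hw : φ.width ≤ 1) :
    ∃ χ : (addRel L n).Sentence,
      ∀ (A : Type) [L.Structure A] (X : Set (Fin n → A)), X.Finite →
        (TeamSat A φ X
          ↔ @FirstOrder.Language.Sentence.Realize (addRel L n) A
              (expandStructure L n A (fun v => v ∈ X)) χ) := by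
  refine ⟨DepAux.t1 L n φ ⊤, fun A _ X _ => ?_⟩
  have h := DepAux.t1_correct L n X φ hq hw ⊤
  have hset : {s ∈ X | (⊤ : L.Formula (Fin n)).Realize s} = X := by
    ext s; simp [Language.Formula.realize_top]
  rw [hset] at h
  exact h
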